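/- Let S : ℝ² → ℝ³ be a smooth (C^∞) map of (x,y) with |S(x,y)| = 1 for all (x,y), let v₀ : ℝ² → ℝ be a smooth function satisfying ∂_x v₀ = ∂_x S · ∂_x∂_y S, and let v₁ : ℝ² → ℝ be any smooth function. Then at every point S · ( ∂_x²∂_y S + ∂_x( (∂_x S · ∂_y S + v₀) S - v₁ S × ∂_x S ) ) = 0; i.e., the right-hand side of the 2+1 dimensional integrable mKdV spin model -S_t = S_{xxy} + ((S_x·S_y + v₀)S - v₁ S×S_x)_x is everywhere orthogonal to S, so the flow preserves the constraint |S| = 1. -/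

import Mathlib

noncomputable section

/-- Partial derivative with respect to the first variable `x`. -/
def px {E : Type*} [NormedAddCommGroup E] [NormedSpace ℝ E]
    (f : ℝ × ℝ → E) : ℝ × ℝ → E := fun p => deriv (fun s => f (s, p.2)) p.1

/-- Partial derivative with respect to the second variable `y`. -/
def py {E : Type*} [NormedAddCommGroup E] [NormedSpace ℝ E]
    (f : ℝ × ℝ → E) : ℝ × ℝ → E := fun p => deriv (fun s => f (p.1, s)) p.2

/-- Euclidean dot product on `ℝ³`. -/
def dot3 (a b : Fin 3 → ℝ) : ℝ := a 0 * b 0 + a 1 * b 1 + a 2 * b 2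

/-- Euclidean norm on `ℝ³`. -/
def norm3 (a : Fin 3 → ℝ) : ℝ := Real.sqrt (dot3 a a)

/-- Cross product on `ℝ³`. -/
def cross3 (a b : Fin 3 → ℝ) : Fin 3 → ℝ :=
  ![a 1 * b 2 - a 2 * b 1, a 2 * b 0 - a 0 * b 2, a 0 * b 1 - a 1 * b 0]

section Aux

variable {E : Type*} [NormedAddCommGroup E] [NormedSpace ℝ E]

lemma hasDerivAt_sliceX {f : ℝ × ℝ → E} (hf : ContDiff ℝ (⊤ : ℕ∞) f) (p : ℝ × ℝ) :
    HasDerivAt (fun s => f (s, p.2)) (px f p) p.1 := by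
  have h1 : HasDerivAt (fun s : ℝ => ((s, p.2) : ℝ × ℝ)) ((1 : ℝ), (0 : ℝ)) p.1 :=
    (hasDerivAt_id p.1).prodMk (hasDerivAt_const p.1 p.2)
  have h2 : HasDerivAt (fun s => f (s, p.2)) (fderiv ℝ f p (1, 0)) p.1 :=
    (hf.differentiable (by simp) (p.1, p.2)).hasFDerivAt.comp_hasDerivAt p.1 h1
  have h3 := h2.deriv
  unfold px
  rw [h3]; exact h2

lemma hasDerivAt_sliceY {f : ℝ × ℝ → E} (hf : ContDiff ℝ (⊤ : ℕ∞) f) (p : ℝ × ℝ) :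
    HasDerivAt (fun s => f (p.1, s)) (py f p) p.2 := by
  have h1 : HasDerivAt (fun s : ℝ => ((p.1, s) : ℝ × ℝ)) ((0 : ℝ), (1 : ℝ)) p.2 :=
    (hasDerivAt_const p.2 p.1).prodMk (hasDerivAt_id p.2)
  have h2 : HasDerivAt (fun s => f (p.1, s)) (fderiv ℝ f p (0, 1)) p.2 :=
    (hf.differentiable (by simp) (p.1, p.2)).hasFDerivAt.comp_hasDerivAt p.2 h1
  have h3 := h2.deriv
  unfold py
  rw [h3]; exact h2

lemma contDiff_px {f : ℝ × ℝ → E} (hf : ContDiff ℝ (⊤ : ℕ∞) f) :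
    ContDiff ℝ (⊤ : ℕ∞) (px f) := by
  have h : px f = fun p => fderiv ℝ f p (1, 0) := by
    funext p
    have h1 : HasDerivAt (fun s : ℝ => ((s, p.2) : ℝ × ℝ)) ((1 : ℝ), (0 : ℝ)) p.1 :=
      (hasDerivAt_id p.1).prodMk (hasDerivAt_const p.1 p.2)
    have h2 : HasDerivAt (fun s => f (s, p.2)) (fderiv ℝ f p (1, 0)) p.1 :=
      (hf.differentiable (by simp) (p.1, p.2)).hasFDerivAt.comp_hasDerivAt p.1 h1
    exact h2.deriv
  rw [h]
  exact (hf.fderiv_right (by exact_mod_cast le_top)).clm_apply contDiff_const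

lemma contDiff_py {f : ℝ × ℝ → E} (hf : ContDiff ℝ (⊤ : ℕ∞) f) :
    ContDiff ℝ (⊤ : ℕ∞) (py f) := by
  have h : py f = fun p => fderiv ℝ f p (0, 1) := by
    funext p
    have h1 : HasDerivAt (fun s : ℝ => ((p.1, s) : ℝ × ℝ)) ((0 : ℝ), (1 : ℝ)) p.2 :=
      (hasDerivAt_const p.2 p.1).prodMk (hasDerivAt_id p.2)
    have h2 : HasDerivAt (fun s => f (p.1, s)) (fderiv ℝ f p (0, 1)) p.2 :=
      (hf.differentiable (by simp) (p.1, p.2)).hasFDerivAt.comp_hasDerivAt p.2 h1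
    exact h2.deriv
  rw [h]
  exact (hf.fderiv_right (by exact_mod_cast le_top)).clm_apply contDiff_const

end Aux

lemma sliceX_comp {f : ℝ × ℝ → Fin 3 → ℝ} (hf : ContDiff ℝ (⊤ : ℕ∞) f) (p : ℝ × ℝ)
    (i : Fin 3) : HasDerivAt (fun s => f (s, p.2) i) (px f p i) p.1 :=
  hasDerivAt_pi.mp (hasDerivAt_sliceX hf p) i

lemma sliceY_comp {f : ℝ × ℝ → Fin 3 → ℝ} (hf : ContDiff ℝ (⊤ : ℕ∞) f) (p : ℝ × ℝ)
    (i : Fin 3) : HasDerivAt (fun s => f (p.1, s) i) (py f p i) p.2 :=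
  hasDerivAt_pi.mp (hasDerivAt_sliceY hf p) i

lemma sliceX_dot3 {f g : ℝ × ℝ → Fin 3 → ℝ} (hf : ContDiff ℝ (⊤ : ℕ∞) f)
    (hg : ContDiff ℝ (⊤ : ℕ∞) g) (p : ℝ × ℝ) :
    HasDerivAt (fun s => dot3 (f (s, p.2)) (g (s, p.2)))
      (dot3 (px f p) (g p) + dot3 (f p) (px g p)) p.1 := by
  have Hf := fun i => sliceX_comp hf p i
  have Hg := fun i => sliceX_comp hg p i
  have H := (((Hf 0).mul (Hg 0)).add ((Hf 1).mul (Hg 1))).add ((Hf 2).mul (Hg 2))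
  have e : dot3 (px f p) (g p) + dot3 (f p) (px g p)
      = (px f p 0 * g (p.1, p.2) 0 + f (p.1, p.2) 0 * px g p 0
          + (px f p 1 * g (p.1, p.2) 1 + f (p.1, p.2) 1 * px g p 1))
        + (px f p 2 * g (p.1, p.2) 2 + f (p.1, p.2) 2 * px g p 2) := by
    simp [dot3]; ring
  rw [e]; exact H

lemma sliceY_dot3 {f g : ℝ × ℝ → Fin 3 → ℝ} (hf : ContDiff ℝ (⊤ : ℕ∞) f)
    (hg : ContDiff ℝ (⊤ : ℕ∞) g) (p : ℝ × ℝ) :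
    HasDerivAt (fun s => dot3 (f (p.1, s)) (g (p.1, s)))
      (dot3 (py f p) (g p) + dot3 (f p) (py g p)) p.2 := by
  have Hf := fun i => sliceY_comp hf p i
  have Hg := fun i => sliceY_comp hg p i
  have H := (((Hf 0).mul (Hg 0)).add ((Hf 1).mul (Hg 1))).add ((Hf 2).mul (Hg 2))
  have e : dot3 (py f p) (g p) + dot3 (f p) (py g p)
      = (py f p 0 * g (p.1, p.2) 0 + f (p.1, p.2) 0 * py g p 0
          + (py f p 1 * g (p.1, p.2) 1 + f (p.1, p.2) 1 * py g p 1))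
        + (py f p 2 * g (p.1, p.2) 2 + f (p.1, p.2) 2 * py g p 2) := by
    simp [dot3]; ring
  rw [e]; exact H

lemma dot3_add_right (a b c : Fin 3 → ℝ) : dot3 a (b + c) = dot3 a b + dot3 a c := by
  simp [dot3]; ring

lemma dot3_sub_right (a b c : Fin 3 → ℝ) : dot3 a (b - c) = dot3 a b - dot3 a c := by
  simp [dot3]; ring

lemma dot3_smul_right (r : ℝ) (a b : Fin 3 → ℝ) : dot3 a (r • b) = r * dot3 a b := by
  simp [dot3]; ring

lemma dot3_cross_self (a b : Fin 3 → ℝ) : dot3 a (cross3 a b) = 0 := by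
  simp [dot3, cross3]; ring

lemma dot3_cross_same (a b : Fin 3 → ℝ) : dot3 a (cross3 b b) = 0 := by
  simp [dot3, cross3]; ring

/-- The right-hand side of the 2+1 dimensional mKdV spin model
`-S_t = S_xxy + ((S_x·S_y + v₀)S - v₁ S×S_x)_x` is everywhere orthogonal
to the unit vector `S`. -/
theorem mkdv_2plus1_rhs_orthogonal
    (S : ℝ × ℝ → Fin 3 → ℝ) (v₀ v₁ : ℝ × ℝ → ℝ)
    (hS : ContDiff ℝ (⊤ : ℕ∞) S)
    (hv₀ : ContDiff ℝ (⊤ : ℕ∞) v₀) (hv₁ : ContDiff ℝ (⊤ : ℕ∞) v₁)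
    (hunit : ∀ p, norm3 (S p) = 1)
    (hv₀x : ∀ p, px v₀ p = dot3 (px S p) (px (py S) p)) :
    ∀ p, dot3 (S p)
      (px (px (py S)) p
        + px (fun q => (dot3 (px S q) (py S q) + v₀ q) • S q
            - v₁ q • cross3 (S q) (px S q)) p) = 0 := by
  have hSx : ContDiff ℝ (⊤ : ℕ∞) (px S) := contDiff_px hS
  have hSy : ContDiff ℝ (⊤ : ℕ∞) (py S) := contDiff_py hS
  have hSxy : ContDiff ℝ (⊤ : ℕ∞) (px (py S)) := contDiff_px hSy
  have hSS : ∀ q, dot3 (S q) (S q) = 1 := by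
    intro q
    have h0 : 0 ≤ dot3 (S q) (S q) := by
      simp only [dot3]; nlinarith [sq_nonneg (S q 0), sq_nonneg (S q 1), sq_nonneg (S q 2)]
    have h1 := hunit q
    unfold norm3 at h1
    nlinarith [Real.sq_sqrt h0, h1]
  -- S · S_x = 0
  have I1x : ∀ q, dot3 (S q) (px S q) = 0 := by
    intro q
    have H := sliceX_dot3 hS hS q
    have e : (fun s => dot3 (S (s, q.2)) (S (s, q.2))) = fun _ => (1 : ℝ) :=
      funext fun s => hSS (s, q.2)
    rw [e] at H
    have h0 := H.unique (hasDerivAt_const q.1 1)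
    have hc : dot3 (px S q) (S q) = dot3 (S q) (px S q) := by simp [dot3]; ring
    linarith [h0, hc.symm ▸ h0]
  -- S · S_y = 0
  have I1 : ∀ q, dot3 (S q) (py S q) = 0 := by
    intro q
    have H := sliceY_dot3 hS hS q
    have e : (fun s => dot3 (S (q.1, s)) (S (q.1, s))) = fun _ => (1 : ℝ) :=
      funext fun s => hSS (q.1, s)
    rw [e] at H
    have h0 := H.unique (hasDerivAt_const q.2 1)
    have hc : dot3 (py S q) (S q) = dot3 (S q) (py S q) := by simp [dot3]; ring
    linarith
  -- S_x · S_y + S · S_xy = 0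
  have I2 : ∀ q, dot3 (px S q) (py S q) + dot3 (S q) (px (py S) q) = 0 := by
    intro q
    have H := sliceX_dot3 hS hSy q
    have e : (fun s => dot3 (S (s, q.2)) (py S (s, q.2))) = fun _ => (0 : ℝ) :=
      funext fun s => I1 (s, q.2)
    rw [e] at H
    exact H.unique (hasDerivAt_const q.1 0)
  -- S_xx · S_y + 2 S_x · S_xy + S · S_xxy = 0
  have I3 : ∀ q, (dot3 (px (px S) q) (py S q) + dot3 (px S q) (px (py S) q))
      + (dot3 (px S q) (px (py S) q) + dot3 (S q) (px (px (py S)) q)) = 0 := by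
    intro q
    have H := (sliceX_dot3 hSx hSy q).add (sliceX_dot3 hS hSxy q)
    have e : (fun s => dot3 (px S (s, q.2)) (py S (s, q.2))
        + dot3 (S (s, q.2)) (px (py S) (s, q.2))) = fun _ => (0 : ℝ) :=
      funext fun s => I2 (s, q.2)
    change HasDerivAt (fun s => dot3 (px S (s, q.2)) (py S (s, q.2))
        + dot3 (S (s, q.2)) (px (py S) (s, q.2))) _ q.1 at H
    rw [e] at H
    exact H.unique (hasDerivAt_const q.1 0)
  intro p
  -- component slice derivatives at p
  have hSi := fun i => sliceX_comp hS p i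
  have hSxi := fun i => sliceX_comp hSx p i
  have hv1 := hasDerivAt_sliceX hv₁ p
  -- derivative of the coefficient a = S_x·S_y + v₀
  have ha : HasDerivAt (fun s => dot3 (px S (s, p.2)) (py S (s, p.2)) + v₀ (s, p.2))
      ((dot3 (px (px S) p) (py S p) + dot3 (px S p) (px (py S) p)) + px v₀ p) p.1 :=
    (sliceX_dot3 hSx hSy p).add (hasDerivAt_sliceX hv₀ p)
  -- derivative of the cross product components
  have hCi : ∀ i, HasDerivAt (fun s => cross3 (S (s, p.2)) (px S (s, p.2)) i)
      ((cross3 (px S p) (px S p) + cross3 (S p) (px (px S) p)) i) p.1 := by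
    intro i
    fin_cases i
    · exact (((hSi 1).mul (hSxi 2)).sub ((hSi 2).mul (hSxi 1))).congr_deriv
        (by simp [cross3]; ring)
    · exact (((hSi 2).mul (hSxi 0)).sub ((hSi 0).mul (hSxi 2))).congr_deriv
        (by simp [cross3]; ring)
    · exact (((hSi 0).mul (hSxi 1)).sub ((hSi 1).mul (hSxi 0))).congr_deriv
        (by simp [cross3]; ring)
  -- the full flux derivative
  set V : Fin 3 → ℝ :=
    ((dot3 (px (px S) p) (py S p) + dot3 (px S p) (px (py S) p)) + px v₀ p) • S p
    + (dot3 (px S (p.1, p.2)) (py S (p.1, p.2)) + v₀ (p.1, p.2)) • px S p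
    - (px v₁ p • cross3 (S (p.1, p.2)) (px S (p.1, p.2))
       + v₁ (p.1, p.2) • (cross3 (px S p) (px S p) + cross3 (S p) (px (px S) p)))
    with hVdef
  have hF : HasDerivAt
      (fun s => (dot3 (px S (s, p.2)) (py S (s, p.2)) + v₀ (s, p.2)) • S (s, p.2)
        - v₁ (s, p.2) • cross3 (S (s, p.2)) (px S (s, p.2))) V p.1 := by
    apply hasDerivAt_pi.mpr
    intro i
    exact ((ha.mul (hSi i)).sub (hv1.mul (hCi i)))
  have hpxF : px (fun q => (dot3 (px S q) (py S q) + v₀ q) • S q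
      - v₁ q • cross3 (S q) (px S q)) p = V := hF.deriv
  rw [hpxF]
  rw [hVdef]
  simp only [Prod.mk.eta, dot3_add_right, dot3_sub_right, dot3_smul_right,
    dot3_cross_self, dot3_cross_same, hSS, I1x, mul_one, mul_zero, add_zero, zero_add, sub_zero]
  have h3 := I3 p
  have hv := hv₀x p
  linarith
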